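/- For every m ≥ 3 there exists a 3-connected graph G_m having a 2-connected spanning subgraph H_m with γ_g(G_m) ≥ 2m − 2 and γ_g(H_m) = m. -/

import Mathlib

open Finset

namespace DomGame

variable {V : Type*} [Fintype V] [DecidableEq V]

/-- Closed neighborhood of `v` in `G`, as a `Finset`. -/
noncomputable def cn (G : SimpleGraph V) (v : V) : Finset V :=
  haveI : DecidablePred (fun u : V => u = v ∨ G.Adj v u) := fun _ => Classical.propDecidable _
  Finset.univ.filter (fun u : V => u = v ∨ G.Adj v u)

/-- Value (number of remaining moves, optimal play) of the domination game on `G`,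
with fuel, where `D` is the set of already dominated vertices and `who = true`
means Dominator is to move (minimizing); `who = false` means Staller (maximizing). -/
noncomputable def auxVal (G : SimpleGraph V) : ℕ → Bool → Finset V → ℕ
  | 0, _, _ => 0
  | n + 1, who, D =>
    if D = Finset.univ then 0
    else
      haveI : DecidablePred (fun v : V => ¬ cn G v ⊆ D) := fun _ => Classical.propDecidable _
      let moves : Finset V := Finset.univ.filter (fun v : V => ¬ cn G v ⊆ D)
      if who then
        WithTop.untopD 0 ((moves.image (fun v => 1 + auxVal G n false (D ∪ cn G v))).min)
      else
        moves.sup (fun v => 1 + auxVal G n true (D ∪ cn G v))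

/-- Remaining moves of the domination game on the partially dominated graph `(G, D)`,
Dominator to move, both players optimal. -/
noncomputable def gVal (G : SimpleGraph V) (D : Finset V) : ℕ :=
  auxVal G (Fintype.card V) true D

/-- Remaining moves, Staller to move. -/
noncomputable def gVal' (G : SimpleGraph V) (D : Finset V) : ℕ :=
  auxVal G (Fintype.card V) false D

/-- The game domination number (Dominator starts). -/
noncomputable def gammaG (G : SimpleGraph V) : ℕ := gVal G ∅

/-- The Staller-start game domination number. -/
noncomputable def gammaG' (G : SimpleGraph V) : ℕ := gVal' G ∅

/-- `S` is a dominating set of `G`. -/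
def IsDomSet (G : SimpleGraph V) (S : Finset V) : Prop :=
  ∀ v : V, ∃ u ∈ S, u = v ∨ G.Adj u v

/-- The domination number of `G`. -/
noncomputable def gamma (G : SimpleGraph V) : ℕ :=
  sInf {n | ∃ S : Finset V, IsDomSet G S ∧ S.card = n}

end DomGame

/-- `G` is `k`-connected: it has more than `k` vertices, and deleting any fewer
than `k` vertices leaves a connected graph. -/
def KConn {V : Type*} [Fintype V] [DecidableEq V] (G : SimpleGraph V) (k : ℕ) : Prop :=
  k < Fintype.card V ∧
    ∀ S : Finset V, S.card < k → (G.induce {v : V | v ∉ S}).Connected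


namespace DomGame
variable {V : Type*} [Fintype V] [DecidableEq V]

lemma auxVal_zero {G : SimpleGraph V} {who : Bool} {D : Finset V} :
    auxVal G 0 who D = 0 := by rw [auxVal]



noncomputable def moves (G : SimpleGraph V) (D : Finset V) : Finset V :=
  haveI : DecidablePred (fun v : V => ¬ cn G v ⊆ D) := fun _ => Classical.propDecidable _
  Finset.univ.filter (fun v : V => ¬ cn G v ⊆ D)

lemma mem_cn {G : SimpleGraph V} {v u : V} : u ∈ cn G v ↔ (u = v ∨ G.Adj v u) := by
  classical
  unfold cn
  rw [Finset.filter_congr_decidable, Finset.mem_filter]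
  simp

lemma self_mem_cn {G : SimpleGraph V} {v : V} : v ∈ cn G v := mem_cn.2 (Or.inl rfl)

lemma mem_moves {G : SimpleGraph V} {D : Finset V} {v : V} :
    v ∈ moves G D ↔ ¬ cn G v ⊆ D := by
  classical
  unfold moves
  rw [Finset.filter_congr_decidable, Finset.mem_filter]
  simp

lemma moves_nonempty {G : SimpleGraph V} {D : Finset V} (h : D ≠ Finset.univ) :
    (moves G D).Nonempty := by
  obtain ⟨x, hx⟩ : ∃ x, x ∉ D := by
    by_contra hc; push_neg at hc
    exact h (Finset.eq_univ_iff_forall.2 hc)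
  exact ⟨x, mem_moves.2 (fun hs => hx (hs self_mem_cn))⟩

lemma auxVal_succ_true {G : SimpleGraph V} {n : ℕ} {D : Finset V} (h : D ≠ Finset.univ) :
    auxVal G (n+1) true D =
      WithTop.untopD 0 (((moves G D).image (fun v => 1 + auxVal G n false (D ∪ cn G v))).min) := by
  rw [auxVal]; simp [h, moves]

lemma auxVal_succ_false {G : SimpleGraph V} {n : ℕ} {D : Finset V} (h : D ≠ Finset.univ) :
    auxVal G (n+1) false D =
      (moves G D).sup (fun v => 1 + auxVal G n true (D ∪ cn G v)) := by
  rw [auxVal]; simp [h, moves]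

lemma auxVal_univ {G : SimpleGraph V} {n : ℕ} {who : Bool} :
    auxVal G n who (Finset.univ) = 0 := by
  cases n with
  | zero => rw [auxVal]
  | succ n => rw [auxVal]; simp

lemma untop'_le_of_le {x : WithTop ℕ} {a : ℕ} (h : x ≤ (a : WithTop ℕ)) :
    WithTop.untopD 0 x ≤ a := by
  cases x with
  | top => simp
  | coe b => exact (show b ≤ a by simpa using h)

lemma auxVal_true_le {G : SimpleGraph V} {n : ℕ} {D : Finset V} (h : D ≠ Finset.univ)
    {v : V} (hv : v ∈ moves G D) :
    auxVal G (n+1) true D ≤ 1 + auxVal G n false (D ∪ cn G v) := by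
  rw [auxVal_succ_true h]
  exact untop'_le_of_le (Finset.min_le (Finset.mem_image_of_mem _ hv))

lemma le_auxVal_true {G : SimpleGraph V} {n : ℕ} {D : Finset V} (h : D ≠ Finset.univ)
    {t : ℕ} (ht : ∀ v ∈ moves G D, t ≤ 1 + auxVal G n false (D ∪ cn G v)) :
    t ≤ auxVal G (n+1) true D := by
  rw [auxVal_succ_true h]
  have hne : ((moves G D).image (fun v => 1 + auxVal G n false (D ∪ cn G v))).Nonempty :=
    (moves_nonempty h).image _
  obtain ⟨a, ha⟩ := Finset.min_of_nonempty hne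
  rw [ha]
  obtain ⟨v, hv, hva⟩ := Finset.mem_image.1 (Finset.mem_of_min ha)
  rw [← hva]; exact ht v hv

lemma le_auxVal_false {G : SimpleGraph V} {n : ℕ} {D : Finset V} (h : D ≠ Finset.univ)
    {v : V} (hv : v ∈ moves G D) :
    1 + auxVal G n true (D ∪ cn G v) ≤ auxVal G (n+1) false D := by
  rw [auxVal_succ_false h]
  exact Finset.le_sup (f := fun v => 1 + auxVal G n true (D ∪ cn G v)) hv

lemma auxVal_false_le {G : SimpleGraph V} {n : ℕ} {D : Finset V} (h : D ≠ Finset.univ)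
    {t : ℕ} (ht : ∀ v ∈ moves G D, 1 + auxVal G n true (D ∪ cn G v) ≤ t) :
    auxVal G (n+1) false D ≤ t := by
  rw [auxVal_succ_false h]
  exact Finset.sup_le (fun v hv => ht v hv)



variable {W : Type*} [Fintype W] [DecidableEq W]

variable {W : Type*} [Fintype W] [DecidableEq W]

lemma cn_comap (e : V ≃ W) (G : SimpleGraph V) (x : W) :
    cn (G.comap ⇑e.symm) x = (cn G (e.symm x)).map e.toEmbedding := by
  ext u
  rw [Finset.mem_map_equiv, mem_cn, mem_cn, SimpleGraph.comap_adj]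
  constructor
  · rintro (rfl | h)
    · exact Or.inl rfl
    · exact Or.inr h
  · rintro (h | h)
    · left; have := congrArg e.toFun h; simpa using this
    · exact Or.inr h

lemma map_eq_univ_iff (e : V ≃ W) {D : Finset V} :
    D.map e.toEmbedding = Finset.univ ↔ D = Finset.univ := by
  constructor
  · intro h
    apply Finset.eq_univ_iff_forall.2
    intro x
    have : e x ∈ D.map e.toEmbedding := h ▸ Finset.mem_univ _
    rwa [Finset.mem_map_equiv, Equiv.symm_apply_apply] at this
  · rintro rfl; exact Finset.map_univ_equiv e

lemma moves_comap (e : V ≃ W) (G : SimpleGraph V) (D : Finset V) :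
    moves (G.comap ⇑e.symm) (D.map e.toEmbedding) = (moves G D).map e.toEmbedding := by
  ext x
  rw [Finset.mem_map_equiv, mem_moves, mem_moves, cn_comap]
  rw [show (D.map e.toEmbedding) = ((D.map e.toEmbedding).map e.symm.toEmbedding).map e.toEmbedding by
        simp [Finset.map_map]]
  rw [Finset.map_subset_map]
  simp [Finset.map_map]

lemma auxVal_comap (e : V ≃ W) (G : SimpleGraph V) :
    ∀ (n : ℕ) (who : Bool) (D : Finset V),
      auxVal (G.comap ⇑e.symm) n who (D.map e.toEmbedding) = auxVal G n who D := by
  intro n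
  induction n with
  | zero => intro who D; rfl
  | succ n ih =>
    intro who D
    by_cases hD : D = Finset.univ
    · subst hD; rw [Finset.map_univ_equiv, auxVal_univ, auxVal_univ]
    · have hD' : D.map e.toEmbedding ≠ Finset.univ := fun h => hD ((map_eq_univ_iff e).1 h)
      have key : ∀ v : V, (D.map e.toEmbedding) ∪ cn (G.comap ⇑e.symm) (e v)
          = (D ∪ cn G v).map e.toEmbedding := by
        intro v
        rw [cn_comap, Finset.map_union]
        congr 2
        simp
      cases who
      · rw [auxVal_succ_false hD', auxVal_succ_false hD, moves_comap, Finset.sup_map]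
        apply Finset.sup_congr rfl
        intro v hv
        simp only [Function.comp, Equiv.coe_toEmbedding]
        rw [key v, ih]
      · rw [auxVal_succ_true hD', auxVal_succ_true hD, moves_comap]
        congr 1
        rw [show (moves G D).map e.toEmbedding = (moves G D).image ⇑e.toEmbedding from
              Finset.map_eq_image _ _, Finset.image_image]
        congr 1
        apply Finset.image_congr
        intro v hv
        simp only [Function.comp, Equiv.coe_toEmbedding]
        rw [key v, ih]

lemma gammaG_comap (e : V ≃ W) (G : SimpleGraph V) :
    gammaG (G.comap ⇑e.symm) = gammaG G := by
  unfold gammaG gVal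
  rw [Fintype.card_congr e.symm]
  have := auxVal_comap e G (Fintype.card V) true ∅
  simpa using this


end DomGame


lemma kconn_of_iso {V : Type*} [Fintype V] [DecidableEq V] {W : Type*} [Fintype W] [DecidableEq W]
    {G : SimpleGraph V} {G' : SimpleGraph W} (φ : G ≃g G') {k : ℕ}
    (h : KConn G k) : KConn G' k := by
  constructor
  · rw [← Fintype.card_congr φ.toEquiv]; exact h.1
  · intro S' hS'
    set S : Finset V := S'.map φ.toEquiv.symm.toEmbedding with hSdef
    have hmem : ∀ v : V, v ∈ S ↔ φ v ∈ S' := by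
      intro v; rw [hSdef, Finset.mem_map_equiv]; simp
    have hcard : S.card < k := by rw [hSdef, Finset.card_map]; exact hS'
    have hconn := h.2 S hcard
    let f : (G.induce {v : V | v ∉ S}) →g (G'.induce {w : W | w ∉ S'}) :=
      ⟨fun x => ⟨φ x.1, fun hc => x.2 ((hmem x.1).2 hc)⟩,
        fun hab => (φ.map_adj_iff).2 hab⟩
    apply hconn.map f
    rintro ⟨w, hw⟩
    refine ⟨⟨φ.symm w, fun hc => hw (by simpa using (hmem (φ.symm w)).1 hc)⟩, ?_⟩
    apply Subtype.ext
    show φ (φ.symm w) = w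
    simp


open DomGame

namespace C14

def inB {m : ℕ} (v : Fin m × Fin (m+2)) : Prop := v.2.val = 1 ∨ v.2.val = 2
def isTok {m : ℕ} (v : Fin m × Fin (m+2)) : Prop := 3 ≤ v.2.val
def tg {m : ℕ} (v : Fin m × Fin (m+2)) : ℕ :=
  if v.2.val - 3 < v.1.val then v.2.val - 3 else v.2.val - 2

instance {m : ℕ} (v : Fin m × Fin (m+2)) : Decidable (inB v) :=
  inferInstanceAs (Decidable (_ ∨ _))
instance {m : ℕ} (v : Fin m × Fin (m+2)) : Decidable (isTok v) :=
  inferInstanceAs (Decidable (_ ≤ _))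

def HH (m : ℕ) : SimpleGraph (Fin m × Fin (m+2)) where
  Adj u v := u ≠ v ∧ (u.1 = v.1 ∨ (inB u ∧ inB v))
  symm := ⟨by
    rintro u v ⟨h1, h2⟩
    refine ⟨h1.symm, ?_⟩
    rcases h2 with h | h
    · exact Or.inl h.symm
    · exact Or.inr ⟨h.2, h.1⟩⟩
  loopless := ⟨fun v h => h.1 rfl⟩

def GG (m : ℕ) : SimpleGraph (Fin m × Fin (m+2)) where
  Adj u v := u ≠ v ∧ (u.1 = v.1 ∨ (inB u ∧ inB v) ∨
      (isTok u ∧ isTok v ∧ tg u = v.1.val ∧ tg v = u.1.val))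
  symm := ⟨by
    rintro u v ⟨h1, h2⟩
    refine ⟨h1.symm, ?_⟩
    rcases h2 with h | h | h
    · exact Or.inl h.symm
    · exact Or.inr (Or.inl ⟨h.2, h.1⟩)
    · exact Or.inr (Or.inr ⟨h.2.1, h.1, h.2.2.2, h.2.2.1⟩)⟩
  loopless := ⟨fun v h => h.1 rfl⟩

lemma HH_adj {m : ℕ} {u v : Fin m × Fin (m+2)} :
    (HH m).Adj u v ↔ (u ≠ v ∧ (u.1 = v.1 ∨ (inB u ∧ inB v))) := Iff.rfl

lemma GG_adj {m : ℕ} {u v : Fin m × Fin (m+2)} :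
    (GG m).Adj u v ↔ (u ≠ v ∧ (u.1 = v.1 ∨ (inB u ∧ inB v) ∨
      (isTok u ∧ isTok v ∧ tg u = v.1.val ∧ tg v = u.1.val))) := Iff.rfl

lemma HH_le_GG (m : ℕ) : HH m ≤ GG m := by
  intro u v h
  exact ⟨h.1, by rcases h.2 with h' | h' <;> [exact Or.inl h'; exact Or.inr (Or.inl h')]⟩

variable {m : ℕ}

-- a-vertices in closed neighborhoods
lemma a_mem_cn_GG {v : Fin m × Fin (m+2)} {j : Fin m} :
    ((j, (0 : Fin (m+2))) ∈ cn (GG m) v) ↔ v.1 = j := by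
  rw [mem_cn]
  constructor
  · rintro (rfl | h)
    · rfl
    · rcases h.2 with h' | h' | h'
      · exact h'
      · exact absurd h'.2 (by simp [inB])
      · exact absurd h'.2.1 (by simp [isTok])
  · intro h
    by_cases hv : v = (j, (0 : Fin (m+2)))
    · exact Or.inl hv.symm
    · exact Or.inr ⟨hv, Or.inl h⟩

lemma a_mem_cn_HH {v : Fin m × Fin (m+2)} {j : Fin m} :
    ((j, (0 : Fin (m+2))) ∈ cn (HH m) v) ↔ v.1 = j := by
  rw [mem_cn]
  constructor
  · rintro (rfl | h)
    · rfl
    · rcases h.2 with h' | h'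
      · exact h'
      · exact absurd h'.2 (by simp [inB])
  · intro h
    by_cases hv : v = (j, (0 : Fin (m+2)))
    · exact Or.inl hv.symm
    · exact Or.inr ⟨hv, Or.inl h⟩

-- region vertices are in the closed neighborhood (both graphs)
lemma region_mem_cn_HH {v x : Fin m × Fin (m+2)} (h : x.1 = v.1) : x ∈ cn (HH m) v := by
  rw [mem_cn]
  by_cases hx : x = v
  · exact Or.inl hx
  · exact Or.inr ⟨fun hc => hx hc.symm, Or.inl h.symm⟩

lemma region_mem_cn_GG {v x : Fin m × Fin (m+2)} (h : x.1 = v.1) : x ∈ cn (GG m) v := by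
  rw [mem_cn]
  by_cases hx : x = v
  · exact Or.inl hx
  · exact Or.inr ⟨fun hc => hx hc.symm, Or.inl h.symm⟩

lemma b_mem_cn_HH {v x : Fin m × Fin (m+2)} (hv : inB v) (hx : inB x) : x ∈ cn (HH m) v := by
  rw [mem_cn]
  by_cases hxv : x = v
  · exact Or.inl hxv
  · exact Or.inr ⟨fun hc => hxv hc.symm, Or.inr ⟨hv, hx⟩⟩

-- membership in cn for HH: everything is same-region or in B
lemma cn_HH_sub {v x : Fin m × Fin (m+2)} (h : x ∈ cn (HH m) v) : x.1 = v.1 ∨ inB x := by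
  rw [mem_cn] at h
  rcases h with rfl | h
  · exact Or.inl rfl
  · rcases h.2 with h' | h'
    · exact Or.inl h'.symm
    · exact Or.inr h'.2

-- cn of a-vertices in GG is within the region
lemma cn_a_GG_sub {j : Fin m} {x : Fin m × Fin (m+2)}
    (h : x ∈ cn (GG m) (j, (0 : Fin (m+2)))) : x.1 = j := by
  rw [mem_cn] at h
  rcases h with rfl | h
  · rfl
  · rcases h.2 with h' | h' | h'
    · exact h'.symm
    · exact absurd h'.1 (by simp [inB])
    · exact absurd h'.1 (by simp [isTok])

-- cross-neighbour uniqueness in GG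
lemma cross_spec {v x : Fin m × Fin (m+2)} (h : x ∈ cn (GG m) v)
    (h1 : x.1 ≠ v.1) (hx : isTok x) :
    isTok v ∧ tg v = x.1.val ∧ tg x = v.1.val := by
  rw [mem_cn] at h
  rcases h with rfl | h
  · exact absurd rfl h1
  · rcases h.2 with h' | h' | h'
    · exact absurd h'.symm h1
    · exact absurd hx (by have := h'.2; unfold inB at this; unfold isTok; omega)
    · exact ⟨h'.1, h'.2.2.1, h'.2.2.2⟩


-- token role arithmetic
def tokRole (home tgt : ℕ) : ℕ := if tgt < home then tgt + 3 else tgt + 2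

lemma tokRole_lt {home tgt : ℕ} (h : tgt < m) (h2 : home < m) : tokRole home tgt < m + 2 := by
  unfold tokRole; split <;> omega

lemma tokRole_ge3 {home tgt : ℕ} (hne : tgt ≠ home) : 3 ≤ tokRole home tgt := by
  unfold tokRole; split <;> omega

def mkTok (home tgt : Fin m) : Fin m × Fin (m+2) :=
  (home, ⟨tokRole home.val tgt.val, tokRole_lt tgt.isLt home.isLt⟩)

lemma tg_mkTok {home tgt : Fin m} (hne : tgt ≠ home) : tg (mkTok home tgt) = tgt.val := by
  have h1 : tgt.val ≠ home.val := fun hc => hne (Fin.ext hc)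
  show tg (home, ⟨tokRole home.val tgt.val, _⟩) = tgt.val
  unfold tg tokRole
  simp only
  split <;> split <;> omega

lemma isTok_mkTok {home tgt : Fin m} (hne : tgt ≠ home) : isTok (mkTok home tgt) := by
  have h1 : tgt.val ≠ home.val := fun hc => hne (Fin.ext hc)
  show (3:ℕ) ≤ tokRole home.val tgt.val
  exact tokRole_ge3 h1

lemma mkTok_adj {j t : Fin m} (hne : j ≠ t) : (GG m).Adj (mkTok j t) (mkTok t j) := by
  refine ⟨?_, Or.inr (Or.inr ⟨isTok_mkTok (Ne.symm hne), isTok_mkTok hne,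
    ?_, ?_⟩)⟩
  · intro hc
    exact hne (congrArg Prod.fst hc)
  · rw [tg_mkTok (Ne.symm hne)]; rfl
  · rw [tg_mkTok hne]; rfl

-- tg is injective on token roles within a region
lemma tg_role_inj {j : Fin m} {r s : Fin (m+2)} (hr : 3 ≤ r.val) (hs : 3 ≤ s.val)
    (h : tg ((j, r) : Fin m × Fin (m+2)) = tg ((j, s) : Fin m × Fin (m+2))) : r = s := by
  have hr' := r.isLt
  have hs' := s.isLt
  apply Fin.ext
  unfold tg at h
  simp only at h
  split_ifs at h <;> omega

lemma cross_uniq {v x y : Fin m × Fin (m+2)} (hx : x ∈ cn (GG m) v) (hy : y ∈ cn (GG m) v)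
    (hx1 : x.1 ≠ v.1) (hy1 : y.1 ≠ v.1) (hxt : isTok x) (hyt : isTok y) : x = y := by
  obtain ⟨_, hvx, hxv⟩ := cross_spec hx hx1 hxt
  obtain ⟨_, hvy, hyv⟩ := cross_spec hy hy1 hyt
  have h1 : x.1 = y.1 := Fin.ext (by omega)
  have key : tg ((x.1, y.2) : Fin m × Fin (m+2)) = tg y := by rw [h1]
  have h2 : x.2 = y.2 := by
    refine tg_role_inj (j := x.1) hxt hyt ?_
    show tg x = tg ((x.1, y.2) : Fin m × Fin (m+2))
    rw [key]
    unfold isTok at hxt hyt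
    omega
  exact Prod.ext h1 h2

-- ### counting
variable (m) in
noncomputable def aliveA (D : Finset (Fin m × Fin (m+2))) : Finset (Fin m) :=
  univ.filter (fun j : Fin m => ((j, (0 : Fin (m+2))) : Fin m × Fin (m+2)) ∉ D)

variable (m) in
noncomputable def uA (D : Finset (Fin m × Fin (m+2))) : ℕ := (aliveA m D).card

variable (m) in
noncomputable def cT (D : Finset (Fin m × Fin (m+2))) : ℕ :=
  (D.filter (fun w => isTok w ∧ ((w.1, (0 : Fin (m+2))) : Fin m × Fin (m+2)) ∉ D)).card

lemma uA_le (D : Finset (Fin m × Fin (m+2))) : uA m D ≤ m := by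
  unfold uA aliveA
  calc (univ.filter _).card ≤ (univ : Finset (Fin m)).card := Finset.card_filter_le _ _
    _ = m := Fintype.card_fin m

lemma aliveA_union_GG (D : Finset (Fin m × Fin (m+2))) (v : Fin m × Fin (m+2)) :
    aliveA m (D ∪ cn (GG m) v) = (aliveA m D).erase v.1 := by
  ext j
  simp only [aliveA, Finset.mem_filter, Finset.mem_univ, true_and, Finset.mem_union,
    Finset.mem_erase]
  rw [not_or]
  constructor
  · rintro ⟨h1, h2⟩
    exact ⟨fun hc => h2 (a_mem_cn_GG.2 hc.symm), h1⟩
  · rintro ⟨h1, h2⟩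
    exact ⟨h2, fun hc => h1 (a_mem_cn_GG.1 hc).symm⟩

lemma aliveA_union_HH (D : Finset (Fin m × Fin (m+2))) (v : Fin m × Fin (m+2)) :
    aliveA m (D ∪ cn (HH m) v) = (aliveA m D).erase v.1 := by
  ext j
  simp only [aliveA, Finset.mem_filter, Finset.mem_univ, true_and, Finset.mem_union,
    Finset.mem_erase]
  rw [not_or]
  constructor
  · rintro ⟨h1, h2⟩
    exact ⟨fun hc => h2 (a_mem_cn_HH.2 hc.symm), h1⟩
  · rintro ⟨h1, h2⟩
    exact ⟨h2, fun hc => h1 (a_mem_cn_HH.1 hc).symm⟩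

lemma a_self_mem_cn_GG (v : Fin m × Fin (m+2)) :
    ((v.1, (0 : Fin (m+2))) : Fin m × Fin (m+2)) ∈ cn (GG m) v := a_mem_cn_GG.2 rfl

-- cT grows by at most 1
lemma cT_union_le (D : Finset (Fin m × Fin (m+2))) (v : Fin m × Fin (m+2)) :
    cT m (D ∪ cn (GG m) v) ≤ cT m D + 1 := by
  classical
  set D' := D ∪ cn (GG m) v with hD'
  set new := (cn (GG m) v).filter (fun x => isTok x ∧ x.1 ≠ v.1) with hnew
  have hsub : D'.filter (fun w => isTok w ∧ ((w.1, (0:Fin (m+2))) : Fin m × Fin (m+2)) ∉ D')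
      ⊆ (D.filter (fun w => isTok w ∧ ((w.1, (0:Fin (m+2))) : Fin m × Fin (m+2)) ∉ D)) ∪ new := by
    intro w hw
    rw [Finset.mem_filter] at hw
    obtain ⟨hwD', hwt, hwa⟩ := hw
    rw [Finset.mem_union]
    rcases Finset.mem_union.1 hwD' with h | h
    · left
      rw [Finset.mem_filter]
      exact ⟨h, hwt, fun hc => hwa (Finset.mem_union_left _ hc)⟩
    · right
      rw [hnew, Finset.mem_filter]
      refine ⟨h, hwt, fun hc => hwa ?_⟩
      rw [hD']
      apply Finset.mem_union_right
      rw [hc]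
      exact a_self_mem_cn_GG v
  have hnew1 : new.card ≤ 1 := by
    rw [Finset.card_le_one]
    intro a ha b hb
    rw [hnew, Finset.mem_filter] at ha hb
    exact cross_uniq ha.1 hb.1 ha.2.2 hb.2.2 ha.2.1 hb.2.1
  calc cT m D' ≤ _ := Finset.card_le_card hsub
    _ ≤ _ + new.card := Finset.card_union_le _ _
    _ ≤ cT m D + 1 := by unfold cT; omega

-- cT does not grow when playing an a-vertex
lemma cT_union_a_le (D : Finset (Fin m × Fin (m+2))) (j : Fin m) :
    cT m (D ∪ cn (GG m) (j, (0 : Fin (m+2)))) ≤ cT m D := by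
  classical
  set v : Fin m × Fin (m+2) := (j, (0 : Fin (m+2))) with hv
  apply Finset.card_le_card
  intro w hw
  rw [Finset.mem_filter] at hw
  obtain ⟨hwD', hwt, hwa⟩ := hw
  rcases Finset.mem_union.1 hwD' with h | h
  · rw [Finset.mem_filter]
    exact ⟨h, hwt, fun hc => hwa (Finset.mem_union_left _ hc)⟩
  · exfalso
    have : w.1 = j := cn_a_GG_sub h
    apply hwa
    apply Finset.mem_union_right
    rw [this]
    exact a_self_mem_cn_GG v


lemma tokRole_inj {home t1 t2 : ℕ} (h1 : t1 ≠ home) (h2 : t2 ≠ home)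
    (h : tokRole home t1 = tokRole home t2) : t1 = t2 := by
  unfold tokRole at h; split_ifs at h <;> omega

lemma waste_exists (D : Finset (Fin m × Fin (m+2)))
    (h : cT m D < (m - uA m D) * uA m D) :
    ∃ v : Fin m × Fin (m+2), ((v.1, (0:Fin (m+2))) : Fin m × Fin (m+2)) ∈ D ∧
      ¬ cn (GG m) v ⊆ D := by
  classical
  by_contra hc
  push_neg at hc
  set dead := univ.filter (fun j : Fin m => ((j,(0:Fin (m+2))) : Fin m × Fin (m+2)) ∈ D)
    with hdeaddef
  have hdead : dead.card = m - uA m D := by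
    have hds : dead = univ \ aliveA m D := by
      ext j
      simp [hdeaddef, aliveA]
    rw [hds, Finset.card_sdiff_of_subset (Finset.subset_univ _)]
    rw [Finset.card_univ, Fintype.card_fin]
    rfl
  set f : Fin m × Fin m → Fin m × Fin (m+2) := fun p => mkTok p.2 p.1 with hf
  have hmem : ∀ p ∈ dead ×ˢ (aliveA m D),
      f p ∈ D.filter (fun w => isTok w ∧ ((w.1, (0:Fin (m+2))) : Fin m × Fin (m+2)) ∉ D) := by
    rintro ⟨j, j'⟩ hp
    rw [Finset.mem_product] at hp
    obtain ⟨hj, hj'⟩ := hp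
    rw [hdeaddef, Finset.mem_filter] at hj
    have hj'2 : ((j',(0:Fin (m+2))) : Fin m × Fin (m+2)) ∉ D := by
      have := Finset.mem_filter.1 hj'
      exact this.2
    have hne : j ≠ j' := by rintro rfl; exact hj'2 hj.2
    rw [Finset.mem_filter]
    refine ⟨?_, isTok_mkTok hne, hj'2⟩
    have hsub := hc (mkTok j j') hj.2
    apply hsub
    exact mem_cn.2 (Or.inr (mkTok_adj hne))
  have hinj : Set.InjOn f ↑(dead ×ˢ (aliveA m D)) := by
    rintro ⟨j1, j1'⟩ hp ⟨j2, j2'⟩ hq heq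
    rw [Finset.coe_product] at hp hq
    obtain ⟨hpd, hpa⟩ := hp
    obtain ⟨hqd, hqa⟩ := hq
    simp only [Finset.mem_coe, hdeaddef, Finset.mem_filter, aliveA] at hpd hpa hqd hqa
    have hne1 : j1 ≠ j1' := by rintro rfl; exact hpa.2 hpd.2
    have hne2 : j2 ≠ j2' := by rintro rfl; exact hqa.2 hqd.2
    have e1 : j1' = j2' := congrArg Prod.fst heq
    have e2 : tokRole j1'.val j1.val = tokRole j2'.val j2.val := by
      have := congrArg Prod.snd heq
      exact congrArg Fin.val this
    subst e1
    have : j1.val = j2.val := tokRole_inj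
      (fun hcc => hne1 (Fin.ext hcc)) (fun hcc => hne2 (Fin.ext hcc)) e2
    exact Prod.ext (Fin.ext this) rfl
  have hcardle := Finset.card_le_card_of_injOn f hmem hinj
  rw [Finset.card_product, hdead] at hcardle
  have hcardle' : (m - uA m D) * uA m D ≤ cT m D := hcardle
  omega


-- ### the two game-value claims for GG
theorem claims : ∀ n : ℕ,
    (∀ D : Finset (Fin m × Fin (m+2)),
      min n (max (uA m D) (2 * uA m D - 2 - (cT m D - 2 * (m - uA m D))))
        ≤ auxVal (GG m) n true D)
    ∧ (∀ D : Finset (Fin m × Fin (m+2)), 1 ≤ uA m D → uA m D < m →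
      min n (max (uA m D) (2 * uA m D - 1 - (cT m D - (2 * (m - uA m D) - 1))))
        ≤ auxVal (GG m) n false D) := by
  intro n
  induction n with
  | zero => exact ⟨fun D => by omega, fun D _ _ => by omega⟩
  | succ n ih =>
    obtain ⟨ihD, ihS⟩ := ih
    constructor
    · intro D
      by_cases hDu : D = Finset.univ
      · have hu0 : uA m D = 0 := by
          subst hDu; unfold uA aliveA; simp
        omega
      · apply le_auxVal_true hDu
        intro v hv
        have hc' : cT m (D ∪ cn (GG m) v) ≤ cT m D + 1 := cT_union_le D v
        have hal : aliveA m (D ∪ cn (GG m) v) = (aliveA m D).erase v.1 := aliveA_union_GG D v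
        have hum : uA m D ≤ m := uA_le D
        by_cases hreg : ((v.1, (0:Fin (m+2))) : Fin m × Fin (m+2)) ∈ D
        · -- v's region is already dead: kills no a
          have hv1 : v.1 ∉ aliveA m D := by simp [aliveA, hreg]
          have hu' : uA m (D ∪ cn (GG m) v) = uA m D := by
            unfold uA; rw [hal, Finset.erase_eq_of_notMem hv1]
          have hulm : uA m D < m := by
            have : aliveA m D ⊂ Finset.univ :=
              ⟨Finset.subset_univ _, fun hsub => hv1 (hsub (Finset.mem_univ _))⟩
            have := Finset.card_lt_card this
            unfold uA
            simpa using this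
          by_cases hu0 : uA m D = 0
          · omega
          · have hIH := ihS (D ∪ cn (GG m) v) (by omega) (by omega)
            omega
        · -- region play
          have hv1 : v.1 ∈ aliveA m D := by simp [aliveA, hreg]
          have hu' : uA m (D ∪ cn (GG m) v) = uA m D - 1 := by
            unfold uA; rw [hal]; exact Finset.card_erase_of_mem hv1
          have hu1 : 1 ≤ uA m D := by
            unfold uA; exact Finset.card_pos.2 ⟨v.1, hv1⟩
          by_cases hu2 : uA m D = 1
          · omega
          · have hIH := ihS (D ∪ cn (GG m) v) (by omega) (by omega)
            omega
    · intro D hu1 hum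
      have hne : D ≠ Finset.univ := by
        obtain ⟨j, hj⟩ := Finset.card_pos.1 hu1
        have hjD := (Finset.mem_filter.1 hj).2
        intro hc
        exact hjD (hc ▸ Finset.mem_univ _)
      by_cases hw : cT m D < (m - uA m D) * uA m D
      · obtain ⟨v, hvdead, hvlegal⟩ := waste_exists D hw
        refine le_trans ?_ (le_auxVal_false hne (mem_moves.2 hvlegal))
        have hc' : cT m (D ∪ cn (GG m) v) ≤ cT m D + 1 := cT_union_le D v
        have hal := aliveA_union_GG D v
        have hv1 : v.1 ∉ aliveA m D := by simp [aliveA, hvdead]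
        have hu' : uA m (D ∪ cn (GG m) v) = uA m D := by
          unfold uA; rw [hal, Finset.erase_eq_of_notMem hv1]
        have hIH := ihD (D ∪ cn (GG m) v)
        omega
      · push_neg at hw
        obtain ⟨j, hj⟩ := Finset.card_pos.1 hu1
        have hjD : ((j, (0:Fin (m+2))) : Fin m × Fin (m+2)) ∉ D := (Finset.mem_filter.1 hj).2
        have hmv : ((j, (0:Fin (m+2))) : Fin m × Fin (m+2)) ∈ moves (GG m) D :=
          mem_moves.2 (fun hsub => hjD (hsub self_mem_cn))
        refine le_trans ?_ (le_auxVal_false hne hmv)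
        have hc' : cT m (D ∪ cn (GG m) ((j, (0:Fin (m+2))) : Fin m × Fin (m+2))) ≤ cT m D :=
          cT_union_a_le D j
        have hal := aliveA_union_GG D ((j, (0:Fin (m+2))) : Fin m × Fin (m+2))
        have hu' : uA m (D ∪ cn (GG m) ((j, (0:Fin (m+2))) : Fin m × Fin (m+2))) = uA m D - 1 := by
          unfold uA; rw [hal]; exact Finset.card_erase_of_mem hj
        have hIH := ihD (D ∪ cn (GG m) ((j, (0:Fin (m+2))) : Fin m × Fin (m+2)))
        rcases Nat.lt_or_ge (uA m D) 3 with h3 | h3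
        · have h12 : uA m D = 1 ∨ uA m D = 2 := by omega
          rcases h12 with h1 | h2
          · omega
          · rw [h2] at hw
            omega
        · have hmul : (m - uA m D) * 3 ≤ (m - uA m D) * uA m D :=
            Nat.mul_le_mul_left _ h3
          have hc3 : (m - uA m D) * 3 ≤ cT m D := le_trans hmul hw
          omega

theorem boundG (hm : 3 ≤ m) : 2 * m - 2 ≤ gammaG (GG m) := by
  have hcard : Fintype.card (Fin m × Fin (m+2)) = m * (m+2) := by
    rw [Fintype.card_prod, Fintype.card_fin, Fintype.card_fin]
  have hu : uA m (∅ : Finset (Fin m × Fin (m+2))) = m := by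
    unfold uA aliveA; simp
  have hcT : cT m (∅ : Finset (Fin m × Fin (m+2))) = 0 := by
    unfold cT; simp
  have h := (claims (m := m) (m * (m+2))).1 ∅
  rw [hu, hcT] at h
  have hN : 2 * m ≤ m * (m + 2) := by
    calc 2 * m = m * 2 := by ring
      _ ≤ m * (m+2) := Nat.mul_le_mul_left m (by omega)
  unfold gammaG gVal
  rw [hcard]
  omega


-- ### lower bound for HH
lemma lowH : ∀ (n : ℕ) (who : Bool) (D : Finset (Fin m × Fin (m+2))),
    min n (uA m D) ≤ auxVal (HH m) n who D := by
  intro n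
  induction n with
  | zero => intro who D; simp
  | succ n ih =>
    intro who D
    by_cases hDu : D = Finset.univ
    · have hu0 : uA m D = 0 := by subst hDu; unfold uA aliveA; simp
      omega
    · have hstep : ∀ v : Fin m × Fin (m+2),
          uA m D - 1 ≤ uA m (D ∪ cn (HH m) v) := by
        intro v
        have hal := aliveA_union_HH D v
        have : (aliveA m D).card - 1 ≤ ((aliveA m D).erase v.1).card :=
          Finset.pred_card_le_card_erase
        unfold uA
        rw [hal]
        exact this
      cases who
      · obtain ⟨v, hv⟩ := moves_nonempty hDu
        refine le_trans ?_ (le_auxVal_false hDu hv)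
        have hIH := ih true (D ∪ cn (HH m) v)
        have := hstep v
        omega
      · apply le_auxVal_true hDu
        intro v hv
        have hIH := ih false (D ∪ cn (HH m) v)
        have := hstep v
        omega

-- ### upper bound machinery for HH
variable (m) in
noncomputable def cov (S : Finset (Fin m)) : Finset (Fin m × Fin (m+2)) :=
  univ.filter (fun x => x.1 ∉ S ∨ inB x)

lemma mem_cov {S : Finset (Fin m)} {x : Fin m × Fin (m+2)} :
    x ∈ cov m S ↔ (x.1 ∉ S ∨ inB x) := by
  unfold cov; simp

lemma covUp : ∀ (n : ℕ) (who : Bool) (S : Finset (Fin m)),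
    auxVal (HH m) n who (cov m S) ≤ S.card := by
  intro n
  induction n with
  | zero => intro who S; rw [auxVal_zero]; exact Nat.zero_le _
  | succ n ih =>
    intro who S
    by_cases hS : S = ∅
    · have : cov m S = Finset.univ := by
        subst hS; unfold cov; simp
      rw [this, auxVal_univ]
      exact Nat.zero_le _
    · obtain ⟨j, hj⟩ := Finset.nonempty_iff_ne_empty.2 hS
      have hjnc : ((j, (0:Fin (m+2))) : Fin m × Fin (m+2)) ∉ cov m S := by
        rw [mem_cov]
        push_neg
        exact ⟨by simpa using hj, by unfold inB; simp⟩
      have hne : cov m S ≠ Finset.univ := fun hc => hjnc (hc ▸ Finset.mem_univ _)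
      have hkey : ∀ v ∈ moves (HH m) (cov m S),
          v.1 ∈ S ∧ cov m S ∪ cn (HH m) v = cov m (S.erase v.1) := by
        intro v hv
        obtain ⟨x, hxcn, hxnc⟩ := Finset.not_subset.1 (mem_moves.1 hv)
        rw [mem_cov] at hxnc
        push_neg at hxnc
        obtain ⟨hx1, hx2⟩ := hxnc
        have hx1' : x.1 ∈ S := hx1
        have hxv : x.1 = v.1 := by
          rcases cn_HH_sub hxcn with h | h
          · exact h
          · exact absurd h hx2
        refine ⟨hxv ▸ hx1', ?_⟩
        ext y
        rw [Finset.mem_union, mem_cov, mem_cov]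
        constructor
        · rintro (h | h)
          · rcases h with h | h
            · exact Or.inl (fun hc => h (Finset.mem_of_mem_erase hc))
            · exact Or.inr h
          · rcases cn_HH_sub h with h' | h'
            · exact Or.inl (fun hc => (Finset.mem_erase.1 hc).1 h')
            · exact Or.inr h'
        · rintro (h | h)
          · by_cases hy : y.1 = v.1
            · exact Or.inr (region_mem_cn_HH hy)
            · left; left
              intro hc
              exact h (Finset.mem_erase.2 ⟨hy, hc⟩)
          · exact Or.inl (Or.inr h)
      cases who
      · apply auxVal_false_le hne
        intro v hv
        obtain ⟨hvS, hunion⟩ := hkey v hv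
        rw [hunion]
        have hIH := ih true (S.erase v.1)
        have hcard : (S.erase v.1).card = S.card - 1 := Finset.card_erase_of_mem hvS
        have hpos : 1 ≤ S.card := Finset.card_pos.2 ⟨v.1, hvS⟩
        omega
      · have hjm : ((j, (0:Fin (m+2))) : Fin m × Fin (m+2)) ∈ moves (HH m) (cov m S) :=
          mem_moves.2 (fun hsub => hjnc (hsub self_mem_cn))
        refine le_trans (auxVal_true_le hne hjm) ?_
        obtain ⟨hvS, hunion⟩ := hkey _ hjm
        rw [hunion]
        have hIH := ih false (S.erase (((j, (0:Fin (m+2))) : Fin m × Fin (m+2))).1)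
        have hcard := Finset.card_erase_of_mem hvS
        have hpos : 1 ≤ S.card := Finset.card_pos.2 ⟨_, hvS⟩
        omega

theorem gammaH (hm : 3 ≤ m) : gammaG (HH m) = m := by
  have h0m : 0 < m := by omega
  have hcard : Fintype.card (Fin m × Fin (m+2)) = m * (m+2) := by
    rw [Fintype.card_prod, Fintype.card_fin, Fintype.card_fin]
  have hNpos : 0 < Fintype.card (Fin m × Fin (m+2)) := by
    rw [hcard]; positivity
  set j0 : Fin m := ⟨0, h0m⟩ with hj0
  set b0 : Fin m × Fin (m+2) := (j0, ⟨1, by omega⟩) with hb0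
  have hne : (∅ : Finset (Fin m × Fin (m+2))) ≠ Finset.univ := by
    intro hc
    have := Finset.mem_univ b0
    rw [← hc] at this
    exact Finset.notMem_empty _ this
  have hm0 : b0 ∈ moves (HH m) (∅ : Finset (Fin m × Fin (m+2))) :=
    mem_moves.2 (fun hsub => (Finset.notMem_empty b0) (hsub self_mem_cn))
  have hb0B : inB b0 := by unfold inB; left; rfl
  have hunion : (∅ : Finset (Fin m × Fin (m+2))) ∪ cn (HH m) b0
      = cov m (Finset.univ.erase j0) := by
    ext x
    rw [Finset.empty_union, mem_cov]
    constructor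
    · intro h
      rcases cn_HH_sub h with h' | h'
      · left
        intro hc
        exact (Finset.mem_erase.1 hc).1 h'
      · exact Or.inr h'
    · rintro (h | h)
      · have hx1 : x.1 = j0 := by
          by_contra hc
          exact h (Finset.mem_erase.2 ⟨hc, Finset.mem_univ _⟩)
        exact region_mem_cn_HH hx1
      · exact b_mem_cn_HH hb0B h
  -- upper bound
  have hup : gammaG (HH m) ≤ m := by
    obtain ⟨N, hN⟩ : ∃ N, Fintype.card (Fin m × Fin (m+2)) = N + 1 :=
      ⟨_, (Nat.succ_pred_eq_of_pos hNpos).symm⟩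
    have h1 : gammaG (HH m) = auxVal (HH m) (N+1) true ∅ := by
      unfold gammaG gVal; rw [hN]
    rw [h1]
    refine le_trans (auxVal_true_le hne hm0) ?_
    rw [hunion]
    have h2 := covUp (m := m) N false (Finset.univ.erase j0)
    have h3 : (Finset.univ.erase j0).card = m - 1 := by
      rw [Finset.card_erase_of_mem (Finset.mem_univ _), Finset.card_univ, Fintype.card_fin]
    omega
  have hlow : m ≤ gammaG (HH m) := by
    have h := lowH (m := m) (Fintype.card (Fin m × Fin (m+2))) true ∅
    have hu : uA m (∅ : Finset (Fin m × Fin (m+2))) = m := by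
      unfold uA aliveA; simp
    have hN : m ≤ Fintype.card (Fin m × Fin (m+2)) := by
      rw [hcard]
      calc m = m * 1 := by ring
        _ ≤ m * (m+2) := Nat.mul_le_mul_left m (by omega)
    unfold gammaG gVal
    rw [hu] at h
    omega
  omega


-- ### connectivity

lemma adjB_GG {b1 b2 : Fin m × Fin (m+2)} (h1 : inB b1) (h2 : inB b2) (hne : b1 ≠ b2) :
    (GG m).Adj b1 b2 := ⟨hne, Or.inr (Or.inl ⟨h1, h2⟩)⟩

lemma adjB_HH {b1 b2 : Fin m × Fin (m+2)} (h1 : inB b1) (h2 : inB b2) (hne : b1 ≠ b2) :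
    (HH m).Adj b1 b2 := ⟨hne, Or.inr ⟨h1, h2⟩⟩

lemma adjR_GG {x y : Fin m × Fin (m+2)} (h : x.1 = y.1) (hne : x ≠ y) :
    (GG m).Adj x y := ⟨hne, Or.inl h⟩

lemma adjR_HH {x y : Fin m × Fin (m+2)} (h : x.1 = y.1) (hne : x ≠ y) :
    (HH m).Adj x y := ⟨hne, Or.inl h⟩

lemma sdiff_nonempty_of_card {S : Finset (Fin m × Fin (m+2))} (hm : 3 ≤ m)
    (hS : S.card < 3) : ∃ v : Fin m × Fin (m+2), v ∉ S := by
  by_contra hc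
  push_neg at hc
  have : (univ : Finset (Fin m × Fin (m+2))) ⊆ S := fun v _ => hc v
  have hcard := Finset.card_le_card this
  rw [Finset.card_univ, Fintype.card_prod, Fintype.card_fin, Fintype.card_fin] at hcard
  nlinarith

-- a region different from j
lemma other_region (hm : 3 ≤ m) (j : Fin m) : ∃ j' : Fin m, j' ≠ j := by
  by_cases h : j.val = 0
  · refine ⟨⟨1, by omega⟩, fun hc => ?_⟩
    apply_fun Fin.val at hc
    simp at hc
    omega
  · refine ⟨⟨0, by omega⟩, fun hc => ?_⟩
    apply_fun Fin.val at hc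
    simp at hc
    omega

theorem connGG (hm : 3 ≤ m) (S : Finset (Fin m × Fin (m+2))) (hS : S.card < 3) :
    ((GG m).induce {v : Fin m × Fin (m+2) | v ∉ S}).Connected := by
  classical
  set P : Set (Fin m × Fin (m+2)) := {v | v ∉ S} with hP
  have radj : ∀ {x y : Fin m × Fin (m+2)} (hx : x ∈ P) (hy : y ∈ P),
      (GG m).Adj x y → ((GG m).induce P).Reachable ⟨x, hx⟩ ⟨y, hy⟩ := by
    intro x y hx hy h
    exact SimpleGraph.Adj.reachable (by exact h)
  have key : ∀ x : ↥P, ∃ y : ↥P, inB y.val ∧ ((GG m).induce P).Reachable x y := by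
    rintro ⟨x, hx⟩
    by_cases hxB : inB x
    · exact ⟨⟨x, hx⟩, hxB, SimpleGraph.Reachable.refl _⟩
    · set j : Fin m := x.1 with hj
      set b1 : Fin m × Fin (m+2) := (j, ⟨1, by omega⟩) with hb1
      set b2 : Fin m × Fin (m+2) := (j, ⟨2, by omega⟩) with hb2
      have hxb1 : x ≠ b1 := by
        intro hc
        apply hxB
        rw [hc]
        exact Or.inl rfl
      have hxb2 : x ≠ b2 := by
        intro hc
        apply hxB
        rw [hc]
        exact Or.inr rfl
      by_cases h1 : b1 ∈ S
      · by_cases h2 : b2 ∈ S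
        · -- S = {b1, b2}; use token route
          have hb12 : b1 ≠ b2 := by
            rw [hb1, hb2]
            intro hc
            have := congrArg (fun z : Fin m × Fin (m+2) => z.2.val) hc
            simp at this
          have hpair : ({b1, b2} : Finset (Fin m × Fin (m+2))) ⊆ S := by
            intro z hz
            rcases Finset.mem_insert.1 hz with rfl | hz
            · exact h1
            · rw [Finset.mem_singleton.1 hz]; exact h2
          have hpaircard : ({b1, b2} : Finset (Fin m × Fin (m+2))).card = 2 := by
            rw [Finset.card_insert_of_notMem (by simpa using hb12), Finset.card_singleton]
          have hSeq : ({b1, b2} : Finset (Fin m × Fin (m+2))) = S :=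
            Finset.eq_of_subset_of_card_le hpair (by omega)
          have hall : ∀ z : Fin m × Fin (m+2), z ≠ b1 → z ≠ b2 → z ∈ P := by
            intro z hz1 hz2
            rw [hP]
            simp only [Set.mem_setOf_eq]
            rw [← hSeq]
            simp [hz1, hz2]
          obtain ⟨j', hj'⟩ := other_region hm j
          set t : Fin m × Fin (m+2) := mkTok j j' with ht
          set t' : Fin m × Fin (m+2) := mkTok j' j with ht'
          have htTok : isTok t := isTok_mkTok hj'
          have ht'Tok : isTok t' := isTok_mkTok (Ne.symm hj')
          have htP : t ∈ P := hall t
            (by intro hc; have := congrArg (fun z : Fin m × Fin (m+2) => z.2.val) hc;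
                unfold isTok at htTok; simp [hb1] at this; omega)
            (by intro hc; have := congrArg (fun z : Fin m × Fin (m+2) => z.2.val) hc;
                unfold isTok at htTok; simp [hb2] at this; omega)
          have ht'1 : t'.1 = j' := rfl
          have ht'P : t' ∈ P := hall t'
            (by intro hc; apply hj'; have := congrArg (fun z : Fin m × Fin (m+2) => z.1) hc;
                simpa [hb1, ht'1] using this)
            (by intro hc; apply hj'; have := congrArg (fun z : Fin m × Fin (m+2) => z.1) hc;
                simpa [hb2, ht'1] using this)
          set b' : Fin m × Fin (m+2) := (j', ⟨1, by omega⟩) with hb'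
          have hb'P : b' ∈ P := hall b'
            (by intro hc; apply hj'; have := congrArg (fun z : Fin m × Fin (m+2) => z.1) hc;
                simpa [hb1, hb'] using this)
            (by intro hc; apply hj'; have := congrArg (fun z : Fin m × Fin (m+2) => z.1) hc;
                simpa [hb2, hb'] using this)
          have hb'B : inB b' := Or.inl rfl
          -- x to t (maybe equal)
          have r1 : ((GG m).induce P).Reachable ⟨x, hx⟩ ⟨t, htP⟩ := by
            rcases eq_or_ne x t with heq | hne
            · rw [show (⟨x, hx⟩ : ↥P) = ⟨t, htP⟩ from Subtype.ext heq]
            · exact radj hx htP (adjR_GG rfl hne)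
          have r2 : ((GG m).induce P).Reachable ⟨t, htP⟩ ⟨t', ht'P⟩ :=
            radj htP ht'P (mkTok_adj (Ne.symm hj'))
          have r3 : ((GG m).induce P).Reachable ⟨t', ht'P⟩ ⟨b', hb'P⟩ := by
            refine radj ht'P hb'P (adjR_GG rfl ?_)
            intro hc
            have := congrArg (fun z : Fin m × Fin (m+2) => z.2.val) hc
            unfold isTok at ht'Tok
            simp [hb'] at this
            omega
          exact ⟨⟨b', hb'P⟩, hb'B, (r1.trans r2).trans r3⟩
        · refine ⟨⟨b2, h2⟩, Or.inr rfl, radj hx h2 (adjR_GG rfl hxb2)⟩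
      · refine ⟨⟨b1, h1⟩, Or.inl rfl, radj hx h1 (adjR_GG rfl hxb1)⟩
  obtain ⟨v0, hv0⟩ := sdiff_nonempty_of_card (S := S) hm hS
  haveI : Nonempty ↥P := ⟨⟨v0, hv0⟩⟩
  refine ⟨?_⟩
  · -- preconnected
    rintro x y
    obtain ⟨bx, hbxB, hrx⟩ := key x
    obtain ⟨by', hbyB, hry⟩ := key y
    refine hrx.trans (SimpleGraph.Reachable.trans ?_ hry.symm)
    rcases eq_or_ne bx by' with heq | hne
    · rw [heq]
    · exact radj bx.2 by'.2 (adjB_GG hbxB hbyB (fun hc => hne (Subtype.ext hc)))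

theorem connHH (hm : 3 ≤ m) (S : Finset (Fin m × Fin (m+2))) (hS : S.card < 2) :
    ((HH m).induce {v : Fin m × Fin (m+2) | v ∉ S}).Connected := by
  classical
  set P : Set (Fin m × Fin (m+2)) := {v | v ∉ S} with hP
  have radj : ∀ {x y : Fin m × Fin (m+2)} (hx : x ∈ P) (hy : y ∈ P),
      (HH m).Adj x y → ((HH m).induce P).Reachable ⟨x, hx⟩ ⟨y, hy⟩ := by
    intro x y hx hy h
    exact SimpleGraph.Adj.reachable (by exact h)
  have key : ∀ x : ↥P, ∃ y : ↥P, inB y.val ∧ ((HH m).induce P).Reachable x y := by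
    rintro ⟨x, hx⟩
    by_cases hxB : inB x
    · exact ⟨⟨x, hx⟩, hxB, SimpleGraph.Reachable.refl _⟩
    · set j : Fin m := x.1 with hj
      set b1 : Fin m × Fin (m+2) := (j, ⟨1, by omega⟩) with hb1
      set b2 : Fin m × Fin (m+2) := (j, ⟨2, by omega⟩) with hb2
      have hxb1 : x ≠ b1 := by
        intro hc; apply hxB; rw [hc]; exact Or.inl rfl
      have hxb2 : x ≠ b2 := by
        intro hc; apply hxB; rw [hc]; exact Or.inr rfl
      by_cases h1 : b1 ∈ S
      · have h2 : b2 ∉ S := by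
          intro h2
          have hb12 : b1 ≠ b2 := by
            rw [hb1, hb2]
            intro hc
            have := congrArg (fun z : Fin m × Fin (m+2) => z.2.val) hc
            simp at this
          have : ({b1, b2} : Finset (Fin m × Fin (m+2))).card ≤ S.card :=
            Finset.card_le_card (by
              intro z hz
              rcases Finset.mem_insert.1 hz with rfl | hz
              · exact h1
              · rw [Finset.mem_singleton.1 hz]; exact h2)
          rw [Finset.card_insert_of_notMem (by simpa using hb12),
            Finset.card_singleton] at this
          omega
        exact ⟨⟨b2, h2⟩, Or.inr rfl, radj hx h2 (adjR_HH rfl hxb2)⟩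
      · exact ⟨⟨b1, h1⟩, Or.inl rfl, radj hx h1 (adjR_HH rfl hxb1)⟩
  obtain ⟨v0, hv0⟩ := sdiff_nonempty_of_card (S := S) hm (by omega)
  haveI : Nonempty ↥P := ⟨⟨v0, hv0⟩⟩
  refine ⟨?_⟩
  · rintro x y
    obtain ⟨bx, hbxB, hrx⟩ := key x
    obtain ⟨by', hbyB, hry⟩ := key y
    refine hrx.trans (SimpleGraph.Reachable.trans ?_ hry.symm)
    rcases eq_or_ne bx by' with heq | hne
    · rw [heq]
    · exact radj bx.2 by'.2 (adjB_HH hbxB hbyB (fun hc => hne (Subtype.ext hc)))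

theorem kconnGG (hm : 3 ≤ m) : KConn (GG m) 3 := by
  constructor
  · rw [Fintype.card_prod, Fintype.card_fin, Fintype.card_fin]
    nlinarith
  · intro S hS
    exact connGG hm S hS

theorem kconnHH (hm : 3 ≤ m) : KConn (HH m) 2 := by
  constructor
  · rw [Fintype.card_prod, Fintype.card_fin, Fintype.card_fin]
    nlinarith
  · intro S hS
    exact connHH hm S hS

end C14


/-- for m ≥ 3 there is a 3-connected graph G with a 2-connected
spanning subgraph H such that γ_g(G) ≥ 2m − 2 and γ_g(H) = m. -/
theorem stmt14 (m : ℕ) (hm : 3 ≤ m) :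
    ∃ (n : ℕ) (G H : SimpleGraph (Fin n)), H ≤ G ∧ KConn G 3 ∧ KConn H 2 ∧
      2 * m - 2 ≤ DomGame.gammaG G ∧ DomGame.gammaG H = m := by
  classical
  refine ⟨m * (m + 2), ?_⟩
  let e : (Fin m × Fin (m+2)) ≃ Fin (m * (m+2)) := finProdFinEquiv
  have φG : (C14.GG m) ≃g ((C14.GG m).comap ⇑e.symm) :=
    ⟨e, by intro a b; rw [SimpleGraph.comap_adj]; simp⟩
  have φH : (C14.HH m) ≃g ((C14.HH m).comap ⇑e.symm) :=
    ⟨e, by intro a b; rw [SimpleGraph.comap_adj]; simp⟩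
  refine ⟨(C14.GG m).comap ⇑e.symm, (C14.HH m).comap ⇑e.symm, ?_, ?_, ?_, ?_, ?_⟩
  · intro u v h
    exact C14.HH_le_GG m h
  · have hc : KConn ((C14.GG m).comap ⇑e.symm) 3 := kconn_of_iso φG (C14.kconnGG hm)
    exact hc
  · have hc : KConn ((C14.HH m).comap ⇑e.symm) 2 := kconn_of_iso φH (C14.kconnHH hm)
    exact hc
  · rw [DomGame.gammaG_comap e (C14.GG m)]
    exact C14.boundG hm
  · rw [DomGame.gammaG_comap e (C14.HH m)]
    exact C14.gammaH hm
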